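/- Let m be a squarefree integer, m ≡ 2 or 3 (mod 4), and let ξ = (a + b√m)/c with a, b, c ∈ ℤ, c ≥ 2, gcd(a,b,c) = 1. If m < 0 and c² > −4m/3, then there exist γ, δ ∈ ℤ[√m] with 0 < |N(ξγ − δ)| < 1, where N is the field norm of ℚ(√m). -/

import Mathlib

/-- Elements of ℚ(√m) are represented by rational coordinates (u, v) ↦ u + v√m,
with norm u² − m v².  ξ = (a + b√m)/c, γ = γ₁ + γ₂√m, δ = δ₁ + δ₂√m ∈ ℤ[√m]. -/
theorem dh_neg_case (m : ℤ) (hm : Squarefree m) (hm23 : m % 4 = 2 ∨ m % 4 = 3)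
    (hmneg : m < 0) (a b c : ℤ) (hc : 2 ≤ c)
    (hgcd : Int.gcd (Int.gcd a b) c = 1)
    (hbound : ((c : ℚ)) ^ 2 > -4 * (m : ℚ) / 3) :
    ∃ γ₁ γ₂ δ₁ δ₂ : ℤ,
      0 < |((a * γ₁ + m * b * γ₂ : ℤ) / (c : ℚ) - (δ₁ : ℚ)) ^ 2
            - (m : ℚ) * ((a * γ₂ + b * γ₁ : ℤ) / (c : ℚ) - (δ₂ : ℚ)) ^ 2| ∧
      |((a * γ₁ + m * b * γ₂ : ℤ) / (c : ℚ) - (δ₁ : ℚ)) ^ 2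
            - (m : ℚ) * ((a * γ₂ + b * γ₁ : ℤ) / (c : ℚ) - (δ₂ : ℚ)) ^ 2| < 1 := by
  have hc0 : (0:ℚ) < (c:ℚ) := by exact_mod_cast lt_of_lt_of_le (by norm_num) hc
  set s := Int.gcdA a b with hs
  set t := Int.gcdB a b with ht
  set w := Int.gcdA (Int.gcd a b) c with hw
  set z := Int.gcdB (Int.gcd a b) c with hz
  have h1 : (Int.gcd a b : ℤ) = a * s + b * t := Int.gcd_eq_gcd_ab a b
  have h2 : (1 : ℤ) = (Int.gcd a b : ℤ) * w + c * z := by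
    have := Int.gcd_eq_gcd_ab (Int.gcd a b : ℤ) c
    rw [hgcd] at this
    exact_mod_cast this
  have hkey : a * (s * w) + b * (t * w) = c * (-z) + 1 := by
    have : (a * s + b * t) * w = 1 - c * z := by rw [← h1]; linarith
    linarith [this]
  set X : ℤ := a * (t * w) + m * b * (s * w) with hX
  refine ⟨t * w, s * w, round ((X : ℚ) / c), -z, ?_, ?_⟩
  · -- positivity
    have hy : ((a * (s * w) + b * (t * w) : ℤ) : ℚ) / c - ((-z : ℤ) : ℚ) = 1 / c := by
      rw [hkey]; push_cast; field_simp; ring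
    rw [hy]
    have hmq : ((m : ℚ)) < 0 := by exact_mod_cast hmneg
    have : (0:ℚ) < - (m:ℚ) * (1/c)^2 := mul_pos (by linarith) (by positivity)
    have h0 : (0:ℚ) < ((X : ℚ) / c - (round ((X : ℚ) / c) : ℚ)) ^ 2
        - (m : ℚ) * (1/c) ^ 2 := by nlinarith [sq_nonneg ((X : ℚ) / c - (round ((X : ℚ) / c) : ℚ))]
    calc (0:ℚ) < _ := h0
    _ ≤ _ := le_abs_self _
  · have hy : ((a * (s * w) + b * (t * w) : ℤ) : ℚ) / c - ((-z : ℤ) : ℚ) = 1 / c := by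
      rw [hkey]; push_cast; field_simp; ring
    rw [hy]
    have hmq : ((m : ℚ)) < 0 := by exact_mod_cast hmneg
    have hx : |(X : ℚ) / c - (round ((X : ℚ) / c) : ℚ)| ≤ 1/2 := abs_sub_round _
    have hx2 : ((X : ℚ) / c - (round ((X : ℚ) / c) : ℚ)) ^ 2 ≤ 1/4 := by
      nlinarith [abs_nonneg ((X : ℚ) / c - (round ((X : ℚ) / c) : ℚ)),
        sq_abs ((X : ℚ) / c - (round ((X : ℚ) / c) : ℚ))]
    have hm34 : - (m : ℚ) * (1/c)^2 < 3/4 := by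
      rw [div_pow, one_pow, mul_one_div, div_lt_iff₀ (by positivity)]
      nlinarith
    have h0 : (0:ℚ) < ((X : ℚ) / c - (round ((X : ℚ) / c) : ℚ)) ^ 2
        - (m : ℚ) * (1/c) ^ 2 := by
      have : (0:ℚ) < - (m:ℚ) * (1/c)^2 := mul_pos (by linarith) (by positivity)
      nlinarith [sq_nonneg ((X : ℚ) / c - (round ((X : ℚ) / c) : ℚ))]
    rw [abs_of_pos h0]
    nlinarith
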